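/- Let x ∈ Bₙ and let ρₙ be the reduced Burau representation. Then M(ρₙ(x)) ≤ sup_d(x), i.e., the maximal q-degree occurring among the entries of the Burau matrix of x is at most the dual (Birman–Ko–Lee) supremum of x. -/

import Mathlib

open LaurentPolynomial

noncomputable section

/-- The Laurent polynomial ring ℤ[q,q⁻¹]. -/
abbrev R : Type := LaurentPolynomial ℤ

/-- The variable q. -/
abbrev q : R := T 1

/-- Maximal degree of a Laurent polynomial, with M(0) = ⊥ (-∞). -/
def Mdeg (f : R) : WithBot ℤ := f.coeff.support.max

/-- Braid relations on m generators. -/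
def braidRels (m : ℕ) : Set (FreeGroup (Fin m)) :=
  {r | (∃ i j : Fin m, (i : ℕ) + 1 = (j : ℕ) ∧
          r = FreeGroup.of i * FreeGroup.of j * FreeGroup.of i *
              (FreeGroup.of j * FreeGroup.of i * FreeGroup.of j)⁻¹) ∨
       (∃ i j : Fin m, (i : ℕ) + 1 < (j : ℕ) ∧
          r = FreeGroup.of i * FreeGroup.of j * (FreeGroup.of j * FreeGroup.of i)⁻¹)}

/-- The braid group on n strands, with n-1 Artin generators. -/
abbrev BraidGroup (n : ℕ) := PresentedGroup (braidRels (n - 1))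

/-- The Artin generator σ_{i+1} (0-based index i). -/
def σ {n : ℕ} (i : Fin (n - 1)) : BraidGroup n := PresentedGroup.of i

/-- Artin generator with a natural-number index (1 outside range), 0-based. -/
def σ' {n : ℕ} (k : ℕ) : BraidGroup n := if h : k < n - 1 then σ ⟨k, h⟩ else 1

/-- The band (Birman–Ko–Lee) generator a_{i,j}, with 0-based punctures i < j < n:
  a_{i,j} = (σ_{j-2}⋯σ_{i+1}σᵢ)⁻¹ σ_{j-1} (σ_{j-2}⋯σ_{i+1}σᵢ) (1-based reading). -/
def band {n : ℕ} (i j : ℕ) : BraidGroup n :=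
  (((List.range (j - 1 - i)).map (fun t => σ' (i + t))).reverse.prod)⁻¹ * σ' (j - 1) *
    ((List.range (j - 1 - i)).map (fun t => σ' (i + t))).reverse.prod

/-- The classical Garside element Δ = (σ₁⋯σ_{n-1})(σ₁⋯σ_{n-2})⋯(σ₁σ₂)σ₁. -/
def halfTwist (n : ℕ) : BraidGroup n :=
  ((List.range (n - 1)).map (fun k => ((List.range (n - 1 - k)).map (σ' (n := n))).prod)).prod

/-- The dual Garside element δ = σ_{n-1}⋯σ₂σ₁. -/
def dualDelta (n : ℕ) : BraidGroup n :=
  (((List.range (n - 1)).map (σ' (n := n))).reverse).prod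

/-- The reduced Burau matrix of the Artin generator σ_{i+1} (0-based i) of Bₙ. -/
def burauGen (n : ℕ) (i : Fin (n - 1)) : Matrix (Fin (n - 1)) (Fin (n - 1)) R :=
  fun j k =>
    if j = k then (if (j : ℕ) = (i : ℕ) then -q else 1)
    else if (k : ℕ) = (i : ℕ) ∧ (j : ℕ) + 1 = (i : ℕ) then q
    else if (k : ℕ) = (i : ℕ) ∧ (j : ℕ) = (i : ℕ) + 1 then 1
    else 0

/-- Maximal q-degree among the entries of a matrix. -/
def Mmat {m : ℕ} (A : Matrix (Fin m) (Fin m) R) : WithBot ℤ :=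
  Finset.univ.sup fun p : Fin m × Fin m => Mdeg (A p.1 p.2)

/-- Maximal q-degree among the entries of the i-th row of a matrix. -/
def Mrow {m : ℕ} (A : Matrix (Fin m) (Fin m) R) (i : Fin m) : WithBot ℤ :=
  Finset.univ.sup fun j : Fin m => Mdeg (A i j)

/-- x is a dual-positive braid: a product of band generators. -/
def DualPositive {n : ℕ} (x : BraidGroup n) : Prop :=
  x ∈ Submonoid.closure {y : BraidGroup n | ∃ i j : ℕ, i < j ∧ j < n ∧ y = band i j}

/-- Dual left divisibility: x ≼_d y iff x⁻¹y is dual-positive. -/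
def DualDvd {n : ℕ} (x y : BraidGroup n) : Prop := DualPositive (x⁻¹ * y)

/-- d is a dual simple element: a dual-positive left divisor of δ. -/
def DualSimple {n : ℕ} (d : BraidGroup n) : Prop :=
  DualPositive d ∧ DualDvd d (dualDelta n)

/-- (d, d') is left-weighted for the dual structure: δ ∧_d (dd') = d, i.e. every
  common dual-prefix of δ and of dd' is a dual-prefix of d. -/
def DualLeftWeighted {n : ℕ} (d d' : BraidGroup n) : Prop :=
  ∀ t : BraidGroup n, DualDvd t (dualDelta n) → DualDvd t (d * d') → DualDvd t d

lemma Mdeg_le_of {f : R} {c : WithBot ℤ} (h : ∀ d ∈ f.coeff.support, (d : WithBot ℤ) ≤ c) :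
    Mdeg f ≤ c := Finset.max_le h

lemma mem_le_Mdeg {f : R} {d : ℤ} (h : d ∈ f.coeff.support) : (d : WithBot ℤ) ≤ Mdeg f :=
  Finset.le_max h

lemma Mdeg_zero : Mdeg (0 : R) = ⊥ := rfl

lemma Mdeg_zero_le (c : WithBot ℤ) : Mdeg (0 : R) ≤ c := by simp [Mdeg_zero]

lemma Mdeg_T (a : ℤ) : Mdeg (T a : R) ≤ (a : WithBot ℤ) := by
  unfold Mdeg
  have hs : (T a : R).coeff.support = {a} :=
    Finsupp.support_single_ne_zero a one_ne_zero
  rw [hs, Finset.max_singleton]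

lemma Mdeg_neg (f : R) : Mdeg (-f) = Mdeg f := by
  unfold Mdeg
  rw [show (-f).coeff.support = f.coeff.support from Finsupp.support_neg f.coeff]

lemma Mdeg_one : Mdeg (1 : R) ≤ (0 : WithBot ℤ) := by
  rw [← T_zero]; exact_mod_cast Mdeg_T 0

lemma Mdeg_add_le {f g : R} {c : WithBot ℤ} (hf : Mdeg f ≤ c) (hg : Mdeg g ≤ c) :
    Mdeg (f + g) ≤ c := by
  apply Mdeg_le_of
  intro d hd
  have := Finsupp.support_add (g₁ := f.coeff) (g₂ := g.coeff) hd
  rcases Finset.mem_union.mp this with h | h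
  · exact le_trans (mem_le_Mdeg h) hf
  · exact le_trans (mem_le_Mdeg h) hg

lemma Mdeg_mul_le (f g : R) : Mdeg (f * g) ≤ Mdeg f + Mdeg g := by
  apply Mdeg_le_of
  intro d hd
  have hd' := AddMonoidAlgebra.support_coeff_mul_subset f g hd
  rcases Finset.mem_add.mp hd' with ⟨a, ha, b, hb, rfl⟩
  calc ((a + b : ℤ) : WithBot ℤ) = (a : WithBot ℤ) + (b : WithBot ℤ) := by push_cast; rfl
  _ ≤ Mdeg f + Mdeg g := add_le_add (mem_le_Mdeg ha) (mem_le_Mdeg hb)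

lemma Mdeg_mul_le' {f g : R} {a b : WithBot ℤ} (hf : Mdeg f ≤ a) (hg : Mdeg g ≤ b) :
    Mdeg (f * g) ≤ a + b :=
  le_trans (Mdeg_mul_le f g) (add_le_add hf hg)

lemma Mdeg_sum_le {ι : Type*} (s : Finset ι) (f : ι → R) (c : WithBot ℤ)
    (h : ∀ i ∈ s, Mdeg (f i) ≤ c) : Mdeg (∑ i ∈ s, f i) ≤ c := by
  classical
  induction s using Finset.cons_induction with
  | empty => simpa using Mdeg_zero_le c
  | cons a s ha ih =>
    rw [Finset.sum_cons]
    exact Mdeg_add_le (h a (Finset.mem_cons_self a s))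
      (ih fun i hi => h i (Finset.mem_cons_of_mem hi))

lemma Mmat_le_of {m : ℕ} {A : Matrix (Fin m) (Fin m) R} {c : WithBot ℤ}
    (h : ∀ r c', Mdeg (A r c') ≤ c) : Mmat A ≤ c :=
  Finset.sup_le fun p _ => h p.1 p.2

lemma Mdeg_le_Mmat {m : ℕ} (A : Matrix (Fin m) (Fin m) R) (r c : Fin m) :
    Mdeg (A r c) ≤ Mmat A :=
  Finset.le_sup (f := fun p : Fin m × Fin m => Mdeg (A p.1 p.2)) (Finset.mem_univ (r, c))

lemma Mmat_one {m : ℕ} : Mmat (1 : Matrix (Fin m) (Fin m) R) ≤ (0 : WithBot ℤ) := by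
  apply Mmat_le_of
  intro r c
  rw [Matrix.one_apply]
  split_ifs
  · exact Mdeg_one
  · exact Mdeg_zero_le _

lemma Mmat_mul_le {m : ℕ} (A B : Matrix (Fin m) (Fin m) R) :
    Mmat (A * B) ≤ Mmat A + Mmat B := by
  apply Mmat_le_of
  intro r c
  rw [Matrix.mul_apply]
  apply Mdeg_sum_le
  intro l _
  exact Mdeg_mul_le' (Mdeg_le_Mmat A r l) (Mdeg_le_Mmat B l c)

lemma Mmat_mul_le' {m : ℕ} {A B : Matrix (Fin m) (Fin m) R} {a b : WithBot ℤ}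
    (ha : Mmat A ≤ a) (hb : Mmat B ≤ b) : Mmat (A * B) ≤ a + b :=
  le_trans (Mmat_mul_le A B) (add_le_add ha hb)

lemma Mmat_pow_le {m : ℕ} {A : Matrix (Fin m) (Fin m) R} {c : ℤ}
    (h : Mmat A ≤ (c : WithBot ℤ)) (k : ℕ) : Mmat (A ^ k) ≤ ((k * c : ℤ) : WithBot ℤ) := by
  induction k with
  | zero => simpa using Mmat_one
  | succ k ih =>
    rw [pow_succ]
    refine le_trans (Mmat_mul_le' ih h) ?_
    rw [← WithBot.coe_add]
    exact_mod_cast le_of_eq (by push_cast; ring)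

/-! ### Rank-one matrices and explicit Burau matrices -/

def uvec (m i j : ℕ) : Fin m → R := fun r =>
  (if (r : ℕ) + 1 = i then q else 0) - (if (r : ℕ) = i then 1 else 0)
  - (if (r : ℕ) + 1 = j then q else 0) + (if (r : ℕ) = j then 1 else 0)

def wvec (m i j : ℕ) : Fin m → R := fun c =>
  if i ≤ (c : ℕ) ∧ (c : ℕ) + 1 ≤ j then 1 else 0

def rankOne {m : ℕ} (u w : Fin m → R) : Matrix (Fin m) (Fin m) R :=
  Matrix.of fun r c => u r * w c

lemma rankOne_apply {m : ℕ} (u w : Fin m → R) (r c : Fin m) :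
    rankOne u w r c = u r * w c := rfl

def Bmat (m i j : ℕ) : Matrix (Fin m) (Fin m) R := 1 + rankOne (uvec m i j) (wvec m i j)

def Nmat (m i j : ℕ) : Matrix (Fin m) (Fin m) R :=
  1 + rankOne (fun r => T (-1) * uvec m i j r) (wvec m i j)

lemma qinv : (T (-1) : R) * q = 1 := by
  rw [show (q : R) = T 1 from rfl, ← T_add]; norm_num

lemma sum_point' {m : ℕ} (t : ℕ) (f : Fin m → R)
    (h : ∀ l : Fin m, (l : ℕ) ≠ t → f l = 0) :
    ∑ l, f l = if ht : t < m then f ⟨t, ht⟩ else 0 := by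
  split_ifs with ht
  · exact Finset.sum_eq_single_of_mem ⟨t, ht⟩ (Finset.mem_univ _)
      (fun b _ hb => h b (by simpa [Fin.ext_iff] using hb))
  · exact Finset.sum_eq_zero fun l _ => h l (by omega)

lemma sum_point {m : ℕ} {t : ℕ} (ht : t < m) (f : Fin m → R)
    (h : ∀ l : Fin m, (l : ℕ) ≠ t → f l = 0) :
    ∑ l, f l = f ⟨t, ht⟩ := by
  rw [sum_point' t f h, dif_pos ht]

lemma rankOne_mul_rankOne {m : ℕ} (u w u' w' : Fin m → R) :
    rankOne u w * rankOne u' w' = (∑ l, w l * u' l) • rankOne u w' := by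
  refine Matrix.ext fun r c => ?_
  rw [Matrix.mul_apply]
  simp only [rankOne_apply, Matrix.smul_apply, smul_eq_mul]
  rw [Finset.sum_mul]
  exact Finset.sum_congr rfl fun l _ => by ring

lemma rankOne_mul {m : ℕ} (u w : Fin m → R) (A : Matrix (Fin m) (Fin m) R) :
    rankOne u w * A = Matrix.of fun r c => u r * (∑ l, w l * A l c) := by
  refine Matrix.ext fun r c => ?_
  rw [Matrix.mul_apply]
  simp only [rankOne_apply, Matrix.of_apply]
  rw [Finset.mul_sum]
  exact Finset.sum_congr rfl fun l _ => by ring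

lemma sum_w_u {m i j : ℕ} (hij : i < j) (hj : j ≤ m) :
    ∑ l, wvec m i j l * uvec m i j l = -1 - q := by
  have key : ∀ l : Fin m, wvec m i j l * uvec m i j l =
      (if (l : ℕ) = i then wvec m i j l *
        ((if (l : ℕ) + 1 = i then q else 0) - 1) else 0) +
      (if (l : ℕ) + 1 = j then wvec m i j l *
        (-q + (if (l : ℕ) = j then 1 else 0)) else 0) := by
    intro l
    simp only [uvec, wvec]
    split_ifs <;> first | omega | ring1 | contradiction
  rw [Finset.sum_congr rfl fun l _ => key l, Finset.sum_add_distrib]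
  have hi : i < m := by omega
  have hj1 : j - 1 < m := by omega
  rw [sum_point hi _ (fun l hl => if_neg hl),
      sum_point hj1 _ (fun l hl => if_neg (by omega))]
  simp only [wvec]
  split_ifs <;> first | omega | ring1 | contradiction

lemma B_mul_N {m i j : ℕ} (hij : i < j) (hj : j ≤ m) :
    Bmat m i j * Nmat m i j = 1 := by
  unfold Bmat Nmat
  rw [mul_add, add_mul, add_mul, mul_one, one_mul, rankOne_mul_rankOne]
  have hs : (∑ l, wvec m i j l * (T (-1) * uvec m i j l)) = T (-1) * (-1 - q) := by
    rw [Finset.sum_congr rfl (fun l _ => by ring :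
        ∀ l ∈ Finset.univ, wvec m i j l * (T (-1) * uvec m i j l)
          = T (-1) * (wvec m i j l * uvec m i j l)),
      ← Finset.mul_sum, sum_w_u hij hj]
  rw [hs]
  refine Matrix.ext fun r c => ?_
  simp only [mul_one, one_mul, Matrix.add_apply, Matrix.smul_apply, rankOne_apply,
    smul_eq_mul]
  linear_combination (-(uvec m i j r * wvec m i j c)) * qinv

lemma N_mul_B {m i j : ℕ} (hij : i < j) (hj : j ≤ m) :
    Nmat m i j * Bmat m i j = 1 :=
  mul_eq_one_comm.mp (B_mul_N hij hj)

lemma one_apply' {m : ℕ} (r c : Fin m) :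
    (1 : Matrix (Fin m) (Fin m) R) r c = if (r : ℕ) = (c : ℕ) then 1 else 0 := by
  by_cases h : r = c
  · subst h; rw [Matrix.one_apply_eq, if_pos rfl]
  · rw [Matrix.one_apply_ne h, if_neg (fun hh => h (Fin.ext hh))]

lemma uvec_step (m i j : ℕ) (r : Fin m) :
    uvec m i j r - uvec m i (i + 1) r = uvec m (i + 1) j r := by
  simp only [uvec]
  split_ifs <;> first | omega | ring1 | contradiction

lemma wvec_step (m i j : ℕ) (hij : i < j) (c : Fin m) :
    wvec m (i + 1) j c + wvec m i (i + 1) c = wvec m i j c := by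
  simp only [wvec]
  split_ifs <;> first | omega | ring1 | contradiction

lemma sum_wa {m i j : ℕ} (hij : i + 1 < j) (hj : j ≤ m) :
    ∑ l, wvec m i (i + 1) l * uvec m i j l = -1 := by
  have hi : i < m := by omega
  rw [sum_point hi (fun l => wvec m i (i + 1) l * uvec m i j l)
      (fun l hl => by simp only [wvec]; rw [if_neg (by omega), zero_mul])]
  simp only [wvec, uvec]
  split_ifs <;> first | omega | ring1 | contradiction

lemma sum_wb {m i j : ℕ} (hij : i + 1 < j) (hj : j ≤ m) :
    ∑ l, wvec m (i + 1) j l * uvec m i (i + 1) l = 1 := by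
  have hi : i + 1 < m := by omega
  rw [sum_point hi (fun l => wvec m (i + 1) j l * uvec m i (i + 1) l)
      (fun l hl => by
        simp only [wvec, uvec]
        split_ifs <;> first | omega | ring)]
  simp only [wvec, uvec]
  split_ifs <;> first | omega | ring1 | contradiction

lemma step_id {m i j : ℕ} (hij : i + 1 < j) (hj : j ≤ m) :
    Bmat m i (i + 1) * Bmat m i j = Bmat m (i + 1) j * Bmat m i (i + 1) := by
  unfold Bmat
  simp only [mul_add, add_mul, mul_one, one_mul]
  rw [rankOne_mul_rankOne, rankOne_mul_rankOne, sum_wa hij hj, sum_wb hij hj]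
  refine Matrix.ext fun r c => ?_
  simp only [Matrix.add_apply, Matrix.smul_apply, rankOne_apply, smul_eq_mul]
  linear_combination (wvec m i j c) * uvec_step m i j r
    - (uvec m (i + 1) j r) * wvec_step m i j (by omega) c

/-! ### The matrix of the dual Garside element δ -/

def Dmat (m k : ℕ) : Matrix (Fin m) (Fin m) R :=
  Matrix.of fun r c =>
    if (r : ℕ) + 1 < k then (if (c : ℕ) = (r : ℕ) + 1 then q else 0)
    else if (r : ℕ) + 1 = k then (if (c : ℕ) < k then -q else 0)
    else if (r : ℕ) = k then (if (c : ℕ) ≤ k then 1 else 0)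
    else (if (c : ℕ) = (r : ℕ) then 1 else 0)

lemma Dmat_apply (m k : ℕ) (r c : Fin m) : Dmat m k r c =
    if (r : ℕ) + 1 < k then (if (c : ℕ) = (r : ℕ) + 1 then q else 0)
    else if (r : ℕ) + 1 = k then (if (c : ℕ) < k then -q else 0)
    else if (r : ℕ) = k then (if (c : ℕ) ≤ k then 1 else 0)
    else (if (c : ℕ) = (r : ℕ) then 1 else 0) := rfl

lemma Dmat_zero (m : ℕ) : Dmat m 0 = 1 := by
  refine Matrix.ext fun r c => ?_
  rw [Dmat_apply, one_apply']
  split_ifs <;> first | omega | ring1 | contradiction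

set_option maxHeartbeats 2000000 in
lemma Dmat_succ (m : ℕ) {k : ℕ} (hk : k < m) :
    Bmat m k (k + 1) * Dmat m k = Dmat m (k + 1) := by
  unfold Bmat
  rw [add_mul, one_mul, rankOne_mul]
  refine Matrix.ext fun r c => ?_
  have hmk : ((⟨k, hk⟩ : Fin m) : ℕ) = k := rfl
  have hsum : (∑ l, wvec m k (k + 1) l * Dmat m k l c) = Dmat m k ⟨k, hk⟩ c := by
    rw [sum_point hk (fun l => wvec m k (k + 1) l * Dmat m k l c) (fun l hl => by
      simp only [wvec]; rw [if_neg (by omega), zero_mul])]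
    simp only [wvec, hmk]
    rw [if_pos (by omega), one_mul]
  simp only [Matrix.add_apply, Matrix.of_apply, hsum]
  rw [Dmat_apply m k ⟨k, hk⟩]
  simp only [hmk]
  rw [if_neg (by omega), if_neg (by omega), if_pos trivial]
  rw [Dmat_apply, Dmat_apply]
  simp only [uvec]
  split_ifs <;> first | omega | ring1 | contradiction

def Emat (m : ℕ) : Matrix (Fin m) (Fin m) R :=
  Matrix.of fun r c =>
    (if (r : ℕ) = 0 then -T (-1) else 0) + (if (r : ℕ) = (c : ℕ) + 1 then T (-1) else 0)

lemma Emat_apply (m : ℕ) (r c : Fin m) : Emat m r c =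
    (if (r : ℕ) = 0 then -T (-1) else 0) + (if (r : ℕ) = (c : ℕ) + 1 then T (-1) else 0) := rfl

lemma D_mul_E (m : ℕ) : Dmat m m * Emat m = 1 := by
  refine Matrix.ext fun r c => ?_
  rw [Matrix.mul_apply]
  rcases (show (r : ℕ) + 1 < m ∨ (r : ℕ) + 1 = m by omega) with hr | hr
  · rw [sum_point hr (fun l => Dmat m m r l * Emat m l c) (fun l hl => by
      show Dmat m m r l * Emat m l c = 0
      rw [Dmat_apply, if_pos hr, if_neg hl, zero_mul])]
    rw [Dmat_apply, Emat_apply, one_apply']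
    simp only [show ((⟨(r : ℕ) + 1, hr⟩ : Fin m) : ℕ) = (r : ℕ) + 1 from rfl]
    split_ifs <;> first | omega | ring1 | contradiction | (linear_combination q * qinv) | (linear_combination qinv) | (linear_combination (1 - q) * qinv)
  · have hD : ∀ l : Fin m, Dmat m m r l = -q := fun l => by
      rw [Dmat_apply, if_neg (by omega), if_pos hr, if_pos l.isLt]
    rw [Finset.sum_congr rfl (fun l _ => by rw [hD] :
        ∀ l ∈ Finset.univ, Dmat m m r l * Emat m l c = -q * Emat m l c),
      ← Finset.mul_sum]
    have hsplit : (∑ l, Emat m l c) =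
        (∑ l : Fin m, (if (l : ℕ) = 0 then -T (-1) else 0))
        + (∑ l : Fin m, (if (l : ℕ) = (c : ℕ) + 1 then T (-1) else 0)) := by
      rw [← Finset.sum_add_distrib]
      exact Finset.sum_congr rfl fun l _ => Emat_apply m l c
    have hm : 0 < m := by omega
    rw [hsplit, sum_point hm (fun l => if (l : ℕ) = 0 then -T (-1) else 0)
        (fun l hl => if_neg hl),
      sum_point' ((c : ℕ) + 1) (fun l => if (l : ℕ) = (c : ℕ) + 1 then T (-1) else 0)
        (fun l hl => if_neg hl), one_apply']
    simp only [show ((⟨0, hm⟩ : Fin m) : ℕ) = 0 from rfl]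
    split_ifs <;> first | omega | ring1 | contradiction | (linear_combination q * qinv) | (linear_combination (-q) * qinv) | (linear_combination qinv) | (linear_combination (1 - q) * qinv)

lemma E_mul_D (m : ℕ) : Emat m * Dmat m m = 1 :=
  mul_eq_one_comm.mp (D_mul_E m)

/-! ### Degree bounds for the explicit matrices -/

lemma Mdeg_ite {P : Prop} [Decidable P] {x : R} {c : WithBot ℤ}
    (hx : Mdeg x ≤ c) : Mdeg (if P then x else 0) ≤ c := by
  split_ifs
  · exact hx
  · exact Mdeg_zero_le c

lemma Mdeg_q : Mdeg (q : R) ≤ (1 : WithBot ℤ) := by exact_mod_cast Mdeg_T 1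

lemma Mdeg_uvec (m i j : ℕ) (r : Fin m) : Mdeg (uvec m i j r) ≤ (1 : WithBot ℤ) := by
  unfold uvec
  rw [sub_eq_add_neg, sub_eq_add_neg]
  refine Mdeg_add_le (Mdeg_add_le (Mdeg_add_le (Mdeg_ite Mdeg_q) ?_) ?_) ?_
  · rw [Mdeg_neg]; exact Mdeg_ite (le_trans Mdeg_one (by norm_num))
  · rw [Mdeg_neg]; exact Mdeg_ite Mdeg_q
  · exact Mdeg_ite (le_trans Mdeg_one (by norm_num))

lemma Mdeg_wvec (m i j : ℕ) (c : Fin m) : Mdeg (wvec m i j c) ≤ (0 : WithBot ℤ) :=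
  Mdeg_ite Mdeg_one

lemma Mmat_Nmat (m i j : ℕ) : Mmat (Nmat m i j) ≤ (0 : WithBot ℤ) := by
  apply Mmat_le_of
  intro r c
  unfold Nmat
  rw [Matrix.add_apply, rankOne_apply]
  refine Mdeg_add_le ?_ ?_
  · rw [one_apply']
    exact Mdeg_ite Mdeg_one
  · have h1 : Mdeg (T (-1) * uvec m i j r) ≤ (0 : WithBot ℤ) := by
      have := Mdeg_mul_le' (Mdeg_T (-1)) (Mdeg_uvec m i j r)
      exact le_trans this (le_of_eq (by rw [← WithBot.coe_one, ← WithBot.coe_add]; norm_num))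
    simpa using Mdeg_mul_le' h1 (Mdeg_wvec m i j c)

lemma Mmat_Dmat (m : ℕ) : Mmat (Dmat m m) ≤ (1 : WithBot ℤ) := by
  apply Mmat_le_of
  intro r c
  rw [Dmat_apply]
  have hq : Mdeg (-q : R) ≤ (1 : WithBot ℤ) := by rw [Mdeg_neg]; exact Mdeg_q
  have h1 : Mdeg (1 : R) ≤ (1 : WithBot ℤ) := le_trans Mdeg_one (by norm_num)
  split_ifs <;> first | exact Mdeg_q | exact hq | exact h1 | exact Mdeg_zero_le _

lemma Mmat_Emat (m : ℕ) : Mmat (Emat m) ≤ ((-1 : ℤ) : WithBot ℤ) := by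
  apply Mmat_le_of
  intro r c
  rw [Emat_apply]
  have h1 : Mdeg (-T (-1) : R) ≤ ((-1 : ℤ) : WithBot ℤ) := by
    rw [Mdeg_neg]; exact_mod_cast Mdeg_T (-1)
  have h2 : Mdeg (T (-1) : R) ≤ ((-1 : ℤ) : WithBot ℤ) := by exact_mod_cast Mdeg_T (-1)
  exact Mdeg_add_le (Mdeg_ite h1) (Mdeg_ite h2)

/-! ### Group-side lemmas -/

section GroupSide

variable {n : ℕ}

lemma band_base (i : ℕ) : band (n := n) i (i + 1) = σ' i := by
  unfold band
  rw [show i + 1 - 1 - i = 0 by omega, show i + 1 - 1 = i by omega]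
  simp

lemma band_succ {i j : ℕ} (h : i + 1 < j) :
    band (n := n) i j = (σ' i)⁻¹ * band (i + 1) j * σ' i := by
  have hlist : (((List.range (j - 1 - i)).map (fun t => σ' (n := n) (i + t))).reverse).prod
      = (((List.range (j - 1 - (i + 1))).map (fun t => σ' (n := n) (i + 1 + t))).reverse).prod
        * σ' i := by
    rw [show j - 1 - i = (j - 1 - (i + 1)) + 1 by omega, List.range_succ_eq_map,
      List.map_cons, List.map_map, List.reverse_cons, List.prod_append]
    have hfun : ((fun t => σ' (n := n) (i + t)) ∘ Nat.succ)
        = fun t => σ' (n := n) (i + 1 + t) := by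
      funext t
      simp only [Function.comp_apply]
      congr 1
      omega
    rw [hfun]
    simp
  unfold band
  rw [hlist, mul_inv_rev]
  group

lemma dual_partial_succ (k : ℕ) :
    ((((List.range (k + 1)).map (σ' (n := n))).reverse).prod : BraidGroup n)
      = σ' k * (((List.range k).map (σ' (n := n))).reverse).prod := by
  rw [List.range_succ, List.map_append, List.reverse_append]
  simp

end GroupSide

/-! ### Burau matrices of bands and of δ -/

section Rho

variable {n : ℕ} (ρ : BraidGroup n →* GL (Fin (n - 1)) R)
  (hρ : ∀ i : Fin (n - 1), (ρ (σ i) : Matrix (Fin (n - 1)) (Fin (n - 1)) R) = burauGen n i)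

lemma burauGen_eq (i : ℕ) (h : i < n - 1) :
    burauGen n ⟨i, h⟩ = Bmat (n - 1) i (i + 1) := by
  refine Matrix.ext fun r c => ?_
  simp only [burauGen, Bmat, rankOne_apply, Matrix.add_apply, uvec, wvec, one_apply',
    Fin.ext_iff]
  split_ifs <;> first | omega | ring1 | contradiction

include hρ in
lemma rho_sigma' (i : ℕ) (h : i < n - 1) :
    ((ρ (σ' i) : GL (Fin (n - 1)) R) : Matrix (Fin (n - 1)) (Fin (n - 1)) R)
      = Bmat (n - 1) i (i + 1) := by
  unfold σ'
  rw [dif_pos h, hρ, burauGen_eq i h]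

include hρ in
lemma rho_band : ∀ (k i j : ℕ), i < j → j < n → j - 1 - i = k →
    ((ρ (band i j) : GL (Fin (n - 1)) R) : Matrix (Fin (n - 1)) (Fin (n - 1)) R)
      = Bmat (n - 1) i j := by
  intro k
  induction k with
  | zero =>
    intro i j hij hj hk
    have hji : j = i + 1 := by omega
    subst hji
    rw [band_base i, rho_sigma' ρ hρ i (by omega)]
  | succ k ih =>
    intro i j hij hj hk
    have h1 : i + 1 < j := by omega
    have hgrp : σ' (n := n) i * band i j = band (i + 1) j * σ' i := by
      rw [band_succ h1]
      group
    have hmat := congrArg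
      (fun g : BraidGroup n => ((ρ g : GL (Fin (n - 1)) R) :
        Matrix (Fin (n - 1)) (Fin (n - 1)) R)) hgrp
    simp only [map_mul, Units.val_mul] at hmat
    rw [ih (i + 1) j h1 hj (by omega), rho_sigma' ρ hρ i (by omega)] at hmat
    have hstep := step_id (m := n - 1) (i := i) (j := j) h1 (by omega)
    calc ((ρ (band i j) : GL (Fin (n - 1)) R) : Matrix (Fin (n - 1)) (Fin (n - 1)) R)
        = (Nmat (n - 1) i (i + 1) * Bmat (n - 1) i (i + 1)) *
          ((ρ (band i j) : GL (Fin (n - 1)) R) : Matrix (Fin (n - 1)) (Fin (n - 1)) R) := by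
          rw [N_mul_B (by omega) (by omega), one_mul]
      _ = Nmat (n - 1) i (i + 1) * (Bmat (n - 1) i (i + 1) *
          ((ρ (band i j) : GL (Fin (n - 1)) R) : Matrix (Fin (n - 1)) (Fin (n - 1)) R)) :=
          mul_assoc _ _ _
      _ = Nmat (n - 1) i (i + 1) * (Bmat (n - 1) i (i + 1) * Bmat (n - 1) i j) := by
          rw [hmat, hstep]
      _ = (Nmat (n - 1) i (i + 1) * Bmat (n - 1) i (i + 1)) * Bmat (n - 1) i j := by
          rw [mul_assoc]
      _ = Bmat (n - 1) i j := by rw [N_mul_B (by omega) (by omega), one_mul]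

include hρ in
lemma rho_delta :
    ((ρ (dualDelta n) : GL (Fin (n - 1)) R) : Matrix (Fin (n - 1)) (Fin (n - 1)) R)
      = Dmat (n - 1) (n - 1) := by
  suffices h : ∀ k, k ≤ n - 1 →
      ((ρ ((((List.range k).map (σ' (n := n))).reverse).prod) : GL (Fin (n - 1)) R) :
        Matrix (Fin (n - 1)) (Fin (n - 1)) R) = Dmat (n - 1) k by
    exact h (n - 1) le_rfl
  intro k
  induction k with
  | zero =>
    intro _
    simp only [List.range_zero, List.map_nil, List.reverse_nil, List.prod_nil, map_one,
      Units.val_one]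
    exact (Dmat_zero (n - 1)).symm
  | succ k ih =>
    intro hk
    rw [dual_partial_succ k, map_mul, Units.val_mul, ih (by omega),
      rho_sigma' ρ hρ k (by omega), Dmat_succ (n - 1) (by omega)]

lemma units_inv_coe {M : Type*} [Monoid M] {u : Mˣ} {b : M} (h : b * (u : M) = 1) :
    ((u⁻¹ : Mˣ) : M) = b := by
  calc ((u⁻¹ : Mˣ) : M) = (b * (u : M)) * ((u⁻¹ : Mˣ) : M) := by rw [h, one_mul]
    _ = b * ((u : M) * ((u⁻¹ : Mˣ) : M)) := mul_assoc _ _ _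
    _ = b := by rw [Units.mul_inv, mul_one]

include hρ in
lemma rho_inv_bound {x : BraidGroup n} (hx : DualPositive x) :
    Mmat (((ρ x)⁻¹ : GL (Fin (n - 1)) R) : Matrix (Fin (n - 1)) (Fin (n - 1)) R)
      ≤ (0 : WithBot ℤ) := by
  refine Submonoid.closure_induction
    (motive := fun y _ => Mmat (((ρ y)⁻¹ : GL (Fin (n - 1)) R) :
      Matrix (Fin (n - 1)) (Fin (n - 1)) R) ≤ (0 : WithBot ℤ)) ?_ ?_ ?_ hx
  · rintro y ⟨i, j, hij, hj, rfl⟩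
    have hb : ((ρ (band i j) : GL (Fin (n - 1)) R) :
        Matrix (Fin (n - 1)) (Fin (n - 1)) R) = Bmat (n - 1) i j :=
      rho_band ρ hρ (j - 1 - i) i j hij hj rfl
    have hinv : (((ρ (band i j))⁻¹ : GL (Fin (n - 1)) R) :
        Matrix (Fin (n - 1)) (Fin (n - 1)) R) = Nmat (n - 1) i j := by
      apply units_inv_coe
      rw [hb]
      exact N_mul_B hij (by omega)
    rw [hinv]
    exact Mmat_Nmat (n - 1) i j
  · simp only [map_one, inv_one, Units.val_one]
    exact Mmat_one
  · intro a b _ _ ha hb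
    rw [map_mul, mul_inv_rev, Units.val_mul]
    simpa using Mmat_mul_le' hb ha

include hρ in
lemma rho_simple_bound {y : BraidGroup n} (hy : DualSimple y) :
    Mmat ((ρ y : GL (Fin (n - 1)) R) : Matrix (Fin (n - 1)) (Fin (n - 1)) R)
      ≤ (1 : WithBot ℤ) := by
  obtain ⟨-, hdvd⟩ := hy
  have hdec : y = dualDelta n * (y⁻¹ * dualDelta n)⁻¹ := by group
  rw [hdec, map_mul, Units.val_mul]
  have h2 : Mmat (((ρ (y⁻¹ * dualDelta n))⁻¹ : GL (Fin (n - 1)) R) :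
      Matrix (Fin (n - 1)) (Fin (n - 1)) R) ≤ (0 : WithBot ℤ) := rho_inv_bound ρ hρ hdvd
  rw [map_inv]
  have hDb : Mmat ((ρ (dualDelta n) : GL (Fin (n - 1)) R) :
      Matrix (Fin (n - 1)) (Fin (n - 1)) R) ≤ (1 : WithBot ℤ) := by
    rw [rho_delta ρ hρ]
    exact Mmat_Dmat (n - 1)
  simpa using Mmat_mul_le' hDb h2

include hρ in
lemma rho_zpow_bound (p : ℤ) :
    Mmat (((ρ (dualDelta n) ^ p : GL (Fin (n - 1)) R)) :
      Matrix (Fin (n - 1)) (Fin (n - 1)) R) ≤ (p : WithBot ℤ) := by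
  have hD : ((ρ (dualDelta n) : GL (Fin (n - 1)) R) :
      Matrix (Fin (n - 1)) (Fin (n - 1)) R) = Dmat (n - 1) (n - 1) := rho_delta ρ hρ
  cases p with
  | ofNat k =>
    rw [Int.ofNat_eq_coe, zpow_natCast, Units.val_pow_eq_pow_val, hD]
    have := Mmat_pow_le (Mmat_Dmat (n - 1)) k
    simpa using this
  | negSucc k =>
    rw [zpow_negSucc, ← inv_pow, Units.val_pow_eq_pow_val]
    have hE : (((ρ (dualDelta n))⁻¹ : GL (Fin (n - 1)) R) :
        Matrix (Fin (n - 1)) (Fin (n - 1)) R) = Emat (n - 1) := by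
      apply units_inv_coe
      rw [hD]
      exact E_mul_D (n - 1)
    rw [hE]
    have := Mmat_pow_le (Mmat_Emat (n - 1)) (k + 1)
    refine le_trans this ?_
    have : ((k : ℤ) + 1) * (-1 : ℤ) = Int.negSucc k := by
      rw [Int.negSucc_eq]
      push_cast
      ring
    rw [show ((↑(k + 1) * (-1 : ℤ)) : ℤ) = Int.negSucc k by push_cast [Int.negSucc_eq]; ring]

end Rho

/-- For any braid x ∈ Bₙ, the maximal q-degree among the entries of the reduced Burau
  matrix of x is at most the dual supremum of x: M(ρₙ(x)) ≤ p + r for every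
  decomposition x = δᵖd₁⋯d_r into dual simple elements (hence ≤ sup_d(x), the minimum
  of p + r over such decompositions). -/
theorem burau_degree_le_dual_sup (n : ℕ)
    (ρ : BraidGroup n →* GL (Fin (n - 1)) R)
    (hρ : ∀ i : Fin (n - 1), (ρ (σ i) : Matrix (Fin (n - 1)) (Fin (n - 1)) R) = burauGen n i)
    (x : BraidGroup n) (p : ℤ) (r : ℕ) (d : ℕ → BraidGroup n)
    (hd : ∀ i < r, DualSimple (d i))
    (hx : x = (dualDelta n) ^ p * ((List.range r).map d).prod) :
    Mmat (ρ x : Matrix (Fin (n - 1)) (Fin (n - 1)) R) ≤ ((p + (r : ℤ)) : WithBot ℤ) := by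
  have hprod : ∀ (s : ℕ), (∀ i < s, DualSimple (d i)) →
      Mmat ((ρ (((List.range s).map d).prod) : GL (Fin (n - 1)) R) :
        Matrix (Fin (n - 1)) (Fin (n - 1)) R) ≤ ((s : ℤ) : WithBot ℤ) := by
    intro s
    induction s with
    | zero =>
      intro _
      simp only [List.range_zero, List.map_nil, List.prod_nil, map_one, Units.val_one]
      exact le_trans Mmat_one (by norm_num)
    | succ s ih =>
      intro hds
      rw [List.range_succ, List.map_append, List.prod_append, map_mul, Units.val_mul]
      simp only [List.map_cons, List.map_nil, List.prod_cons, List.prod_nil, mul_one]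
      have h1 := ih (fun i hi => hds i (by omega))
      have h2 : Mmat ((ρ (d s) : GL (Fin (n - 1)) R) :
          Matrix (Fin (n - 1)) (Fin (n - 1)) R) ≤ (1 : WithBot ℤ) :=
        rho_simple_bound ρ hρ (hds s (by omega))
      refine le_trans (Mmat_mul_le' h1 h2) (le_of_eq ?_)
      rw [show (1 : WithBot ℤ) = ((1 : ℤ) : WithBot ℤ) by norm_num, ← WithBot.coe_add]
      norm_num
  rw [hx, map_mul, Units.val_mul, map_zpow]
  refine le_trans (Mmat_mul_le' (rho_zpow_bound ρ hρ p) (hprod r hd)) (le_of_eq ?_)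
  rw [← WithBot.coe_add]
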